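/- A group G endowed with a coarse structure E is a right coarse group if and only if there exists a group ideal I on G such that E = E_I. -/

import Mathlib

/-- A *coarse structure* on `X`: every entourage contains the diagonal, and the family
is closed under composition, inversion, and passing to subsets containing the diagonal. -/
def IsCoarseStructure {X : Type*} (E : Set (Set (X × X))) : Prop :=
  (∀ ε ∈ E, ∀ x : X, (x, x) ∈ ε) ∧
  (∀ ε ∈ E, ∀ δ ∈ E, {p : X × X | ∃ z : X, (p.1, z) ∈ ε ∧ (z, p.2) ∈ δ} ∈ E) ∧
  (∀ ε ∈ E, {p : X × X | (p.2, p.1) ∈ ε} ∈ E) ∧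
  (∀ ε ∈ E, ∀ ε' ⊆ ε, (∀ x : X, (x, x) ∈ ε') → ε' ∈ E)

/-- A family `I` of subsets of a group `G` is a *group ideal*. -/
def IsGroupIdeal {G : Type*} [Group G] (I : Set (Set G)) : Prop :=
  (∀ A ∈ I, ∀ B ⊆ A, B ∈ I) ∧
  (∀ A ∈ I, ∀ B ∈ I, A ∪ B ∈ I) ∧
  (∀ A : Set G, A.Finite → A ∈ I) ∧
  (∀ A ∈ I, ∀ B ∈ I, {x : G | ∃ a ∈ A, ∃ b ∈ B, x = a * b⁻¹} ∈ I)

/-- The entourage `ε_A = {(x, g•x) : x ∈ X, g ∈ A}` determined by `A ⊆ G`. -/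
def entourageOf {G X : Type*} [Group G] [MulAction G X] (A : Set G) : Set (X × X) :=
  {p : X × X | ∃ g ∈ A, p.2 = g • p.1}

/-- The coarse structure `E(G, I, X)` induced on a `G`-space `X` by a group ideal `I`:
all diagonal-containing subsets of some `ε_A` with `A ∈ I`, `1 ∈ A`. -/
def actionCoarse (G : Type*) [Group G] (I : Set (Set G)) (X : Type*) [MulAction G X] :
    Set (Set (X × X)) :=
  {ε | (∀ x : X, (x, x) ∈ ε) ∧ ∃ A ∈ I, (1 : G) ∈ A ∧ ε ⊆ entourageOf A}

/-- `E_I`: the coarse structure on `G` induced by the left action of `G` on itself. -/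
def idealCoarse {G : Type*} [Group G] (I : Set (Set G)) : Set (Set (G × G)) :=
  actionCoarse G I G

/-- The ball `B(x, ε)`. -/
def ball {X : Type*} (ε : Set (X × X)) (x : X) : Set X := {y : X | (x, y) ∈ ε}


/-- `f` is a *coarse (bornologous) mapping* from `(X, EX)` to `(Y, EY)`. -/
def IsCoarseMap {X Y : Type*} (EX : Set (Set (X × X))) (EY : Set (Set (Y × Y)))
    (f : X → Y) : Prop :=
  ∀ ε ∈ EX, ∃ δ ∈ EY, ∀ p ∈ ε, (f p.1, f p.2) ∈ δ

/-- The product coarse structure on `X × Y`, with base the componentwise products of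
entourages. -/
def prodCoarse {X Y : Type*} (EX : Set (Set (X × X))) (EY : Set (Set (Y × Y))) :
    Set (Set ((X × Y) × (X × Y))) :=
  {η | (∀ q : X × Y, (q, q) ∈ η) ∧ ∃ ε ∈ EX, ∃ δ ∈ EY,
    η ⊆ {p : (X × Y) × (X × Y) | (p.1.1, p.2.1) ∈ ε ∧ (p.1.2, p.2.2) ∈ δ}}

/-- `(G, E)` is a *coarse group*: the multiplication and inversion are coarse maps. -/
def IsCoarseGroup {G : Type*} [Group G] (E : Set (Set (G × G))) : Prop :=
  IsCoarseMap (prodCoarse E E) E (fun p => p.1 * p.2) ∧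
  IsCoarseMap E E (fun x : G => x⁻¹)

/-- `(G, E)` is a *left coarse group*. -/
def IsLeftCoarseGroup {G : Type*} [Group G] (E : Set (Set (G × G))) : Prop :=
  ∀ ε ∈ E, ∃ ε' ∈ E, ∀ g x y : G, (x, y) ∈ ε → (g * x, g * y) ∈ ε'

/-- `(G, E)` is a *right coarse group*. -/
def IsRightCoarseGroup {G : Type*} [Group G] (E : Set (Set (G × G))) : Prop :=
  ∀ ε ∈ E, ∃ ε' ∈ E, ∀ g x y : G, (x, y) ∈ ε → (x * g, y * g) ∈ ε'

/-- A coarse structure is *connected* if any two points are related by some entourage. -/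
def IsConnectedCoarse {X : Type*} (E : Set (Set (X × X))) : Prop :=
  ∀ x y : X, ∃ ε ∈ E, (x, y) ∈ ε

/-- A group ideal `I` is *invariant* if `⋃_{g ∈ G} g⁻¹ A g ∈ I` for each `A ∈ I`. -/
def IsInvariantIdeal {G : Type*} [Group G] (I : Set (Set G)) : Prop :=
  ∀ A ∈ I, {x : G | ∃ g : G, ∃ a ∈ A, x = g⁻¹ * a * g} ∈ I

/-- A group `G` endowed with a (connected) coarse structure `E` is a right coarse group
if and only if `E = E_I` for some group ideal `I` on `G`. -/
theorem isRightCoarseGroup_iff_exists_ideal {G : Type*} [Group G]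
    (E : Set (Set (G × G))) (hE : IsCoarseStructure E) (hc : IsConnectedCoarse E) :
    IsRightCoarseGroup E ↔ ∃ I : Set (Set G), IsGroupIdeal I ∧ E = idealCoarse I := by
  obtain ⟨hdiag, hcomp, hinv, hsub⟩ := hE
  constructor
  · intro hR
    -- union closure of E
    have hunion : ∀ ε ∈ E, ∀ δ ∈ E, ε ∪ δ ∈ E := by
      intro ε hε δ hδ
      refine hsub _ (hcomp ε hε δ hδ) (ε ∪ δ) ?_ ?_
      · rintro p (hp | hp)
        · exact ⟨p.2, hp, hdiag δ hδ p.2⟩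
        · exact ⟨p.1, hdiag ε hε p.1, hp⟩
      · intro x; exact Or.inl (hdiag ε hε x)
    refine ⟨{A : Set G | ∃ ε ∈ E, ∀ a ∈ A, (1, a) ∈ ε}, ⟨?_, ?_, ?_, ?_⟩, ?_⟩
    · rintro A ⟨ε, hε, hA⟩ B hBA
      exact ⟨ε, hε, fun a ha => hA a (hBA ha)⟩
    · rintro A ⟨ε, hε, hA⟩ B ⟨δ, hδ, hB⟩
      refine ⟨ε ∪ δ, hunion ε hε δ hδ, ?_⟩
      rintro a (ha | ha)
      · exact Or.inl (hA a ha)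
      · exact Or.inr (hB a ha)
    · intro A hA
      refine Set.Finite.induction_on A hA ?_ ?_
      · obtain ⟨ε, hε, -⟩ := hc 1 1
        exact ⟨ε, hε, fun a ha => ha.elim⟩
      · rintro a s - - ⟨ε, hε, hs⟩
        obtain ⟨δ, hδ, hδa⟩ := hc 1 a
        refine ⟨ε ∪ δ, hunion ε hε δ hδ, ?_⟩
        rintro b (rfl | hb)
        · exact Or.inr hδa
        · exact Or.inl (hs b hb)
    · rintro A ⟨ε, hε, hA⟩ B ⟨δ, hδ, hB⟩
      obtain ⟨δ', hδ', hδ'p⟩ := hR _ (hinv δ hδ)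
      obtain ⟨ε', hε', hε'p⟩ := hR ε hε
      refine ⟨_, hcomp δ' hδ' ε' hε', ?_⟩
      rintro x ⟨a, ha, b, hb, rfl⟩
      refine ⟨b⁻¹, ?_, ?_⟩
      · have := hδ'p b⁻¹ b 1 (hB b hb)
        simpa using this
      · have := hε'p b⁻¹ 1 a (hA a ha)
        simpa using this
    · ext ε
      constructor
      · intro hε
        obtain ⟨ε', hε', hε'p⟩ := hR ε hε
        refine ⟨hdiag ε hε, {g : G | (1, g) ∈ ε'}, ⟨ε', hε', fun a ha => ha⟩,
          hdiag ε' hε' 1, ?_⟩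
        rintro ⟨x, y⟩ hxy
        refine ⟨y * x⁻¹, ?_, ?_⟩
        · have := hε'p x⁻¹ x y hxy
          simpa using this
        · simp [smul_eq_mul, mul_assoc]
      · rintro ⟨hd, A, ⟨δ, hδ, hAδ⟩, h1, hsubA⟩
        obtain ⟨δ', hδ', hδ'p⟩ := hR δ hδ
        refine hsub δ' hδ' ε ?_ hd
        rintro ⟨x, y⟩ hxy
        obtain ⟨g, hg, hy⟩ := hsubA hxy
        have := hδ'p x 1 g (hAδ g hg)
        simp only [one_mul] at this
        simp only [smul_eq_mul] at hy
        have hy2 : y = g * x := hy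
        rw [hy2]; exact this
  · rintro ⟨I, hI, rfl⟩
    intro ε hε
    obtain ⟨hd, A, hA, h1, hsubA⟩ := hε
    refine ⟨entourageOf A, ⟨fun x => ⟨1, h1, by simp⟩, A, hA, h1, subset_rfl⟩, ?_⟩
    intro g x y hxy
    obtain ⟨a, ha, hy⟩ := hsubA hxy
    exact ⟨a, ha, by simp only [smul_eq_mul] at hy ⊢; rw [hy, mul_assoc]⟩
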